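/- arXiv:2207.04990 — 6 statements merged into one kernel-verified Lean document; each statement's English description precedes it below -/
import Mathlib

section
/- The game LCTR is conjugate-invariant: for every partition λ, SG(λ') = SG(λ), where λ' denotes the conjugate partition. -/
/-- Remove the left column of a Young diagram: subtract 1 from each part and
omit nonpositive values. -/
def leftCol (l : List ℕ) : List ℕ := (l.map (· - 1)).filter (0 < ·)

/-- Remove the top row of a Young diagram. -/
def topRow (l : List ℕ) : List ℕ := l.tail

/-- Minimum excluded value of a set of naturals. -/
noncomputable def mex (s : Set ℕ) : ℕ := sInf {n | n ∉ s}

def wt (l : List ℕ) : ℕ := l.sum + l.length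

lemma wt_leftCol_le (l : List ℕ) : wt (leftCol l) ≤ l.sum := by
  induction l with
  | nil => simp [leftCol, wt]
  | cons a t ih =>
    simp only [leftCol, wt] at ih ⊢
    rw [List.map_cons, List.filter_cons]
    by_cases h : 0 < a - 1
    · simp only [h, decide_true, if_true, List.sum_cons, List.length_cons]
      omega
    · simp only [h, decide_false, Bool.false_eq_true, if_false, List.sum_cons]
      omega

lemma wt_leftCol_lt (l : List ℕ) (h : l ≠ []) : wt (leftCol l) < wt l := by
  have h1 := wt_leftCol_le l
  have h2 : 0 < l.length := List.length_pos_iff.mpr h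
  unfold wt at *
  omega

lemma wt_topRow_lt (l : List ℕ) (h : l ≠ []) : wt (topRow l) < wt l := by
  cases l with
  | nil => exact absurd rfl h
  | cons a t => simp [topRow, wt]; omega

/-- The Sprague–Grundy value of a position in the LCTR game. -/
noncomputable def SG (l : List ℕ) : ℕ :=
  if h : l = [] then 0
  else mex {SG (leftCol l), SG (topRow l)}
termination_by wt l
decreasing_by
  · exact wt_leftCol_lt l h
  · exact wt_topRow_lt l h

/-- A partition: a non-increasing list of positive integers. -/
def IsPartition (l : List ℕ) : Prop := l.Pairwise (· ≥ ·) ∧ ∀ x ∈ l, 0 < x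

/-- The conjugate partition: the `j`-th part (for `1 ≤ j ≤ l₁`) is the number
of parts of `l` that are at least `j`. -/
def conj (l : List ℕ) : List ℕ :=
  (List.range (l.headD 0)).map (fun j => l.countP (fun x => decide (j < x)))

lemma filter_lt_range {a b : ℕ} (h : b ≤ a) :
    (List.range a).filter (fun j => decide (j < b)) = List.range b := by
  obtain ⟨c, rfl⟩ := Nat.exists_eq_add_of_le h
  rw [List.range_add, List.filter_append, List.filter_eq_self.mpr, List.filter_eq_nil_iff.mpr,
    List.append_nil]
  · intro j hj
    simp only [List.mem_map] at hj
    obtain ⟨y, _, rfl⟩ := hj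
    simp
  · intro j hj
    simp only [List.mem_range] at hj
    simpa using hj

lemma headD_leftCol (a : ℕ) (t : List ℕ) (ht : ∀ x ∈ t, x ≤ a) :
    (leftCol (a :: t)).headD 0 = a - 1 := by
  unfold leftCol
  rw [List.map_cons, List.filter_cons]
  by_cases h : 0 < a - 1
  · simp [h]
  · simp only [h, decide_false, Bool.false_eq_true, if_false]
    rw [List.filter_eq_nil_iff.mpr]
    · simp; omega
    · intro x hx
      simp only [List.mem_map] at hx
      obtain ⟨y, hy, rfl⟩ := hx
      have := ht y hy
      simp; omega

lemma countP_leftCol (l : List ℕ) (j : ℕ) :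
    (leftCol l).countP (fun x => decide (j < x)) = l.countP (fun x => decide (j + 1 < x)) := by
  unfold leftCol
  rw [List.countP_filter, List.countP_map]
  apply List.countP_congr
  intro x _
  simp only [Function.comp_apply, Bool.and_eq_true, decide_eq_true_eq]
  omega

lemma topRow_conj (a : ℕ) (t : List ℕ) (ha : 0 < a) (ht : ∀ x ∈ t, x ≤ a) :
    topRow (conj (a :: t)) = conj (leftCol (a :: t)) := by
  unfold topRow conj
  rw [headD_leftCol a t ht]
  simp only [List.headD_cons]
  obtain ⟨b, rfl⟩ : ∃ b, a = b + 1 := ⟨a - 1, by omega⟩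
  rw [List.range_succ_eq_map, List.map_cons, List.tail_cons, List.map_map]
  simp only [Nat.add_sub_cancel]
  apply List.map_congr_left
  intro j _
  simp only [Function.comp_apply]
  rw [countP_leftCol]

lemma leftCol_conj (a : ℕ) (t : List ℕ) (ha : 0 < a) (hs : (a :: t).Pairwise (· ≥ ·)) :
    leftCol (conj (a :: t)) = conj (topRow (a :: t)) := by
  have hst : t.Pairwise (· ≥ ·) := hs.of_cons
  have hta : ∀ x ∈ t, x ≤ a := fun x hx => List.rel_of_pairwise_cons hs hx
  have hle : ∀ x ∈ t, x ≤ t.headD 0 := by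
    cases t with
    | nil => simp
    | cons b t' =>
      intro x hx
      rcases List.mem_cons.mp hx with rfl | hx'
      · simp
      · simpa using List.rel_of_pairwise_cons hst hx'
  have hb : t.headD 0 ≤ a := by
    cases t with
    | nil => simp
    | cons b t' => simpa using List.rel_of_pairwise_cons hs List.mem_cons_self
  have hcnt : ∀ j, j < a →
      (a :: t).countP (fun x => decide (j < x)) - 1 = t.countP (fun x => decide (j < x)) := by
    intro j hj
    rw [List.countP_cons]
    simp [hj]
  have hpos : ∀ j, (0 < t.countP (fun x => decide (j < x))) ↔ j < t.headD 0 := by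
    intro j
    rw [List.countP_pos_iff]
    constructor
    · rintro ⟨x, hx, hjx⟩
      have := hle x hx
      simp only [decide_eq_true_eq] at hjx
      omega
    · intro hj
      cases t with
      | nil => simp at hj
      | cons b t' =>
        exact ⟨b, List.mem_cons_self, by simpa using hj⟩
  unfold leftCol topRow conj
  simp only [List.headD_cons, List.map_map]
  rw [List.filter_map]
  have hfc : List.filter ((fun x => decide (0 < x)) ∘ (fun x => x - 1) ∘
        (fun j => (a :: t).countP fun x => decide (j < x))) (List.range a)
      = List.filter (fun j => decide (j < t.headD 0)) (List.range a) := by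
    apply List.filter_congr
    intro j hj
    have hja : j < a := List.mem_range.mp hj
    simp only [Function.comp_apply, decide_eq_decide]
    rw [hcnt j hja]
    exact hpos j
  rw [hfc, filter_lt_range hb]
  apply List.map_congr_left
  intro j hj
  have hja : j < a := lt_of_lt_of_le (List.mem_range.mp hj) hb
  simp only [Function.comp_apply]
  exact hcnt j hja

lemma isPartition_topRow (l : List ℕ) (h : IsPartition l) : IsPartition (topRow l) := by
  cases l with
  | nil => exact h
  | cons a t =>
    exact ⟨h.1.of_cons, fun x hx => h.2 x (List.mem_cons_of_mem a hx)⟩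

lemma isPartition_leftCol (l : List ℕ) (h : IsPartition l) : IsPartition (leftCol l) := by
  constructor
  · exact List.Pairwise.filter _ (List.Pairwise.map _ (fun a b hab => Nat.sub_le_sub_right hab 1) h.1)
  · intro x hx
    have := List.of_mem_filter hx
    simpa using this

lemma conj_ne_nil (a : ℕ) (t : List ℕ) (ha : 0 < a) : conj (a :: t) ≠ [] := by
  intro h
  have : (conj (a :: t)).length = a := by simp [conj]
  rw [h] at this
  simp at this
  omega

lemma SG_conj_aux : ∀ n l, wt l ≤ n → IsPartition l → SG (conj l) = SG l := by
  intro n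
  induction n with
  | zero =>
    intro l hw _
    have hl : l = [] := by
      cases l with
      | nil => rfl
      | cons a t => simp [wt] at hw
    subst hl
    simp [conj]
  | succ n ih =>
    intro l hw hp
    cases l with
    | nil => simp [conj]
    | cons a t =>
      have ha : 0 < a := hp.2 a List.mem_cons_self
      have hta : ∀ x ∈ t, x ≤ a := fun x hx => List.rel_of_pairwise_cons hp.1 hx
      have hne : (a :: t) ≠ [] := List.cons_ne_nil a t
      have hcne : conj (a :: t) ≠ [] := conj_ne_nil a t ha
      conv_lhs => rw [SG]
      conv_rhs => rw [SG]
      rw [dif_neg hcne, dif_neg hne]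
      rw [topRow_conj a t ha hta, leftCol_conj a t ha hp.1]
      have h1 : wt (leftCol (a :: t)) ≤ n := by
        have := wt_leftCol_lt (a :: t) hne; omega
      have h2 : wt (topRow (a :: t)) ≤ n := by
        have := wt_topRow_lt (a :: t) hne; omega
      rw [ih (leftCol (a :: t)) h1 (isPartition_leftCol _ hp),
        ih (topRow (a :: t)) h2 (isPartition_topRow _ hp), Set.pair_comm]

/-- LCTR is conjugate-invariant: conjugate partitions have the same
Sprague–Grundy value. -/
theorem SG_conj (l : List ℕ) (hl : IsPartition l) : SG (conj l) = SG l :=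
  SG_conj_aux (wt l) l le_rfl hl
end

section
/- Let n be a positive integer. Then in LCTR, SG((n²)) = SG((2ⁿ)) = 2 if n is odd, and SG((n²)) = SG((2ⁿ)) = 0 if n is even, where (n²) denotes the partition with two parts equal to n and (2ⁿ) the partition with n parts equal to 2. -/
lemma mex_pair {a b c : ℕ} (h1 : c ≠ a) (h2 : c ≠ b)
    (hmin : ∀ k < c, k = a ∨ k = b) : mex {a, b} = c := by
  unfold mex
  apply le_antisymm
  · exact Nat.sInf_le (by simp [h1, h2])
  · apply le_csInf ⟨c, by simp [h1, h2]⟩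
    intro m hm
    by_contra hlt
    push_neg at hlt
    exact hm (by rcases hmin m hlt with h | h <;> simp [h])

lemma mex00 : mex {0, 0} = 1 := mex_pair (by omega) (by omega) (by omega)
lemma mex01 : mex {0, 1} = 2 := mex_pair (by omega) (by omega) (by omega)
lemma mex10 : mex {1, 0} = 2 := mex_pair (by omega) (by omega) (by omega)
lemma mex20 : mex {2, 0} = 1 := mex_pair (by omega) (by omega) (by omega)
lemma mex02 : mex {0, 2} = 1 := mex_pair (by omega) (by omega) (by omega)
lemma mex22 : mex {2, 2} = 0 := mex_pair (by omega) (by omega) (by omega)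
lemma mex12 : mex {1, 2} = 0 := mex_pair (by omega) (by omega) (by omega)
lemma mex21 : mex {2, 1} = 0 := mex_pair (by omega) (by omega) (by omega)

lemma SG_eq (l : List ℕ) (h : l ≠ []) :
    SG l = mex {SG (leftCol l), SG (topRow l)} := by
  rw [SG]; simp [h]

lemma leftCol_rep_one (k : ℕ) : leftCol (List.replicate k 1) = [] := by
  simp [leftCol, List.map_replicate, List.filter_replicate]

lemma leftCol_rep (k n : ℕ) (h : 2 ≤ n) :
    leftCol (List.replicate k n) = List.replicate k (n - 1) := by
  have : 0 < n - 1 := by omega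
  simp [leftCol, List.map_replicate, List.filter_replicate, this]

lemma topRow_rep (k n : ℕ) : topRow (List.replicate (k+1) n) = List.replicate k n := by
  simp [topRow, List.replicate_succ]

lemma SG_nil : SG [] = 0 := by rw [SG]; simp

lemma SG_row (n : ℕ) (h : 0 < n) : SG [n] = if n % 2 = 1 then 1 else 2 := by
  induction n using Nat.strong_induction_on with
  | _ n ih =>
    have h1 : ([n] : List ℕ) ≠ [] := by simp
    have htop : topRow [n] = [] := rfl
    rcases Nat.lt_or_ge n 2 with h2 | h2
    · interval_cases n
      rw [SG_eq _ h1, htop, show leftCol [1] = [] from rfl, SG_nil,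
        if_pos (by norm_num)]
      exact mex00
    · have hL : leftCol [n] = [n - 1] := by
        have : 0 < n - 1 := by omega
        simp [leftCol, this]
      rw [SG_eq _ h1, htop, hL, SG_nil, ih (n-1) (by omega) (by omega)]
      rcases Nat.even_or_odd n with he | ho
      · have e1 : n % 2 = 0 := Nat.even_iff.mp he
        have e2 : (n-1) % 2 = 1 := by omega
        rw [if_pos e2, if_neg (by omega)]
        exact mex10
      · have e1 : n % 2 = 1 := Nat.odd_iff.mp ho
        have e2 : ¬ (n-1) % 2 = 1 := by omega
        rw [if_neg e2, if_pos e1]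
        exact mex20

lemma SG_col (n : ℕ) (h : 0 < n) :
    SG (List.replicate n 1) = if n % 2 = 1 then 1 else 2 := by
  induction n using Nat.strong_induction_on with
  | _ n ih =>
    have h1 : List.replicate n 1 ≠ [] := by simp; omega
    obtain ⟨k, rfl⟩ : ∃ k, n = k + 1 := ⟨n - 1, by omega⟩
    rw [SG_eq _ h1, leftCol_rep_one, topRow_rep, SG_nil]
    rcases Nat.eq_zero_or_pos k with rfl | hk
    · rw [show List.replicate 0 1 = ([]:List ℕ) from rfl, SG_nil,
        if_pos (by norm_num)]
      exact mex00
    · rw [ih k (by omega) hk]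
      rcases Nat.even_or_odd (k+1) with he | ho
      · have e1 : (k+1) % 2 = 0 := Nat.even_iff.mp he
        have e2 : k % 2 = 1 := by omega
        rw [if_pos e2, if_neg (by omega)]
        exact mex01
      · have e1 : (k+1) % 2 = 1 := Nat.odd_iff.mp ho
        have e2 : ¬ k % 2 = 1 := by omega
        rw [if_neg e2, if_pos e1]
        exact mex02

lemma SG_two_rows_aux (n : ℕ) (h : 0 < n) :
    SG [n, n] = if n % 2 = 1 then 2 else 0 := by
  induction n using Nat.strong_induction_on with
  | _ n ih =>
    have h1 : ([n, n] : List ℕ) ≠ [] := by simp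
    have htop : topRow [n, n] = [n] := rfl
    rcases Nat.lt_or_ge n 2 with h2 | h2
    · interval_cases n
      rw [SG_eq _ h1, htop, show leftCol [1,1] = [] from rfl, SG_nil,
        SG_row 1 (by omega), if_pos (by norm_num), if_pos (by norm_num)]
      exact mex01
    · have hL : leftCol [n, n] = [n - 1, n - 1] := by
        have : 0 < n - 1 := by omega
        simp [leftCol, this]
      rw [SG_eq _ h1, htop, hL, SG_row n (by omega), ih (n-1) (by omega) (by omega)]
      rcases Nat.even_or_odd n with he | ho
      · have e1 : ¬ n % 2 = 1 := by
          have := Nat.even_iff.mp he; omega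
        have e2 : (n-1) % 2 = 1 := by
          have := Nat.even_iff.mp he; omega
        rw [if_pos e2, if_neg e1, if_neg e1]
        exact mex22
      · have e1 : n % 2 = 1 := Nat.odd_iff.mp ho
        have e2 : ¬ (n-1) % 2 = 1 := by omega
        rw [if_neg e2, if_pos e1, if_pos e1]
        exact mex01

lemma SG_two_cols_aux (n : ℕ) (h : 0 < n) :
    SG (List.replicate n 2) = if n % 2 = 1 then 2 else 0 := by
  induction n using Nat.strong_induction_on with
  | _ n ih =>
    have h1 : List.replicate n 2 ≠ [] := by simp; omega
    obtain ⟨k, rfl⟩ : ∃ k, n = k + 1 := ⟨n - 1, by omega⟩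
    have hL : leftCol (List.replicate (k+1) 2) = List.replicate (k+1) 1 :=
      leftCol_rep _ 2 (by omega)
    rw [SG_eq _ h1, hL, topRow_rep, SG_col (k+1) (by omega)]
    rcases Nat.eq_zero_or_pos k with rfl | hk
    · rw [show List.replicate 0 2 = ([]:List ℕ) from rfl, SG_nil,
        if_pos (by norm_num : (0+1) % 2 = 1), if_pos (by norm_num : (0+1) % 2 = 1)]
      exact mex10
    · rw [ih k (by omega) hk]
      rcases Nat.even_or_odd (k+1) with he | ho
      · have e1 : ¬ (k+1) % 2 = 1 := by
          have := Nat.even_iff.mp he; omega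
        have e2 : k % 2 = 1 := by
          have := Nat.even_iff.mp he; omega
        rw [if_neg e1, if_pos e2, if_neg e1]
        exact mex22
      · have e1 : (k+1) % 2 = 1 := Nat.odd_iff.mp ho
        have e2 : ¬ k % 2 = 1 := by omega
        rw [if_pos e1, if_neg e2, if_pos e1]
        exact mex10

/-- The partitions `(n²)` and `(2ⁿ)` have Sprague–Grundy value 2 if `n` is odd
and 0 if `n` is even. -/
theorem SG_two_rows (n : ℕ) (hn : 0 < n) :
    (Odd n → SG (List.replicate 2 n) = 2 ∧ SG (List.replicate n 2) = 2) ∧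
    (Even n → SG (List.replicate 2 n) = 0 ∧ SG (List.replicate n 2) = 0) := by
  have hrep : List.replicate 2 n = [n, n] := rfl
  constructor
  · intro ho
    have e1 : n % 2 = 1 := Nat.odd_iff.mp ho
    rw [hrep, SG_two_rows_aux n hn, SG_two_cols_aux n hn]
    simp [e1]
  · intro he
    have e1 : n % 2 = 0 := Nat.even_iff.mp he
    rw [hrep, SG_two_rows_aux n hn, SG_two_cols_aux n hn]
    simp [e1]
end

section
/- Let λ be a nonempty quadrated partition. Then L(T(λ)) = T(L(λ)), and if this partition is not of the form (n) (a single row) or (1ⁿ) (a single column), then SG(L(T(λ))) = 0, i.e., L(T(λ)) is a P-position in LCTR. -/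
/-- A quadrated partition: all parts are even and each part occurs an even
number of times. -/
def Quadrated (l : List ℕ) : Prop :=
  IsPartition l ∧ (∀ x ∈ l, Even x) ∧ (∀ x : ℕ, Even (l.count x))

lemma leftCol_nil : leftCol [] = [] := rfl

lemma leftCol_cons (a : ℕ) (t : List ℕ) :
    leftCol (a :: t) = if 1 < a then (a-1) :: leftCol t else leftCol t := by
  simp only [leftCol, List.map_cons, List.filter_cons]
  by_cases h : 1 < a
  · simp [h, Nat.lt_sub_iff_add_lt, show (0 < a - 1) from by omega]
  · have : ¬ (0 < a - 1) := by omega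
    simp [h, this]

lemma mem_leftCol {y : ℕ} {l : List ℕ} : y ∈ leftCol l ↔ ∃ x ∈ l, 2 ≤ x ∧ y = x - 1 := by
  simp only [leftCol, List.mem_filter, List.mem_map]
  constructor
  · rintro ⟨⟨x, hx, rfl⟩, h2⟩
    exact ⟨x, hx, by simp at h2; omega, rfl⟩
  · rintro ⟨x, hx, h2, rfl⟩
    exact ⟨⟨x, hx, rfl⟩, by simp; omega⟩

lemma leftCol_eq_nil {l : List ℕ} (h : ∀ x ∈ l, x ≤ 1) : leftCol l = [] := by
  induction l with
  | nil => rfl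
  | cons a t ih =>
    rw [leftCol_cons]
    have ha := h a (by simp)
    simp only [if_neg (by omega : ¬ 1 < a)]
    exact ih (fun x hx => h x (by simp [hx]))

lemma sorted_leftCol {l : List ℕ} (h : l.Pairwise (· ≥ ·)) : (leftCol l).Pairwise (· ≥ ·) := by
  unfold leftCol
  apply List.Pairwise.filter
  exact List.Pairwise.map _ (fun a b hab => Nat.sub_le_sub_right hab 1) h

lemma sorted_cons_leftCol {a : ℕ} {w : List ℕ} (h : (a :: w).Pairwise (· ≥ ·)) :
    ((a - 1) :: leftCol w).Pairwise (· ≥ ·) := by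
  rw [List.pairwise_cons] at h ⊢
  refine ⟨?_, sorted_leftCol h.2⟩
  intro b hb
  obtain ⟨x, hx, h2, rfl⟩ := mem_leftCol.mp hb
  have := h.1 x hx
  omega

lemma mex_pair_exists_not (x y : ℕ) : ∃ n, n ∉ ({x, y} : Set ℕ) :=
  ⟨x + y + 1, by simp; omega⟩

lemma mex_pair_ne_zero {x y : ℕ} (h : x = 0 ∨ y = 0) : mex {x, y} ≠ 0 := by
  intro h0
  unfold mex at h0
  rcases Nat.sInf_eq_zero.mp h0 with h1 | h1
  · simp only [Set.mem_setOf_eq, Set.mem_insert_iff, Set.mem_singleton_iff] at h1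
    push_neg at h1
    omega
  · obtain ⟨n, hn⟩ := mex_pair_exists_not x y
    exact absurd (Set.eq_empty_iff_forall_notMem.mp h1 n) (by simpa using hn)

lemma mex_pair_eq_zero {x y : ℕ} (hx : x ≠ 0) (hy : y ≠ 0) : mex {x, y} = 0 := by
  unfold mex
  exact Nat.sInf_eq_zero.mpr (Or.inl (by simp; omega))

lemma SG_ne_nil {l : List ℕ} (h : l ≠ []) :
    SG l = mex {SG (leftCol l), SG (topRow l)} := by
  rw [SG]; simp [h]

lemma sg_pos_of {ν : List ℕ} (hne : ν ≠ [])
    (h : SG (leftCol ν) = 0 ∨ SG (topRow ν) = 0) : SG ν ≠ 0 := by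
  rw [SG_ne_nil hne]
  exact mex_pair_ne_zero h

lemma sg_zero_of {l : List ℕ} (hne : l ≠ [])
    (h1 : SG (leftCol l) ≠ 0) (h2 : SG (topRow l) ≠ 0) : SG l = 0 := by
  rw [SG_ne_nil hne]
  exact mex_pair_eq_zero h1 h2

def dbl : List ℕ → List ℕ
  | [] => []
  | a :: w => a :: a :: dbl w

lemma mem_dbl {x : ℕ} {w : List ℕ} : x ∈ dbl w ↔ x ∈ w := by
  induction w with
  | nil => simp [dbl]
  | cons a t ih => simp [dbl, ih]

lemma dbl_ne_nil {w : List ℕ} (h : w ≠ []) : dbl w ≠ [] := by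
  cases w with
  | nil => exact absurd rfl h
  | cons a t => simp [dbl]

lemma leftCol_dbl (w : List ℕ) : leftCol (dbl w) = dbl (leftCol w) := by
  induction w with
  | nil => rfl
  | cons a t ih =>
    show leftCol (a :: a :: dbl t) = dbl (leftCol (a :: t))
    rw [leftCol_cons, leftCol_cons, leftCol_cons]
    by_cases h : 1 < a
    · simp [h, ih, dbl]
    · simp [h, ih]

lemma dbl_replicate (t x : ℕ) : dbl (List.replicate t x) = List.replicate (2*t) x := by
  induction t with
  | zero => rfl
  | succ n ih =>
    show dbl (x :: List.replicate n x) = _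
    rw [show 2*(n+1) = (2*n)+1+1 by ring]
    simp [dbl, ih, List.replicate_succ]

lemma leftCol_replicate_two (t : ℕ) :
    leftCol (List.replicate t 2) = List.replicate t 1 := by
  induction t with
  | zero => rfl
  | succ n ih => simp [List.replicate_succ, leftCol_cons, ih]

lemma leftCol_three_one {u : List ℕ} (h : ∀ x ∈ u, x = 3 ∨ x = 1) :
    leftCol u = List.replicate (u.count 3) 2 := by
  induction u with
  | nil => rfl
  | cons a t ih =>
    have ha := h a (by simp)
    rw [leftCol_cons]
    rcases ha with rfl | rfl
    · rw [if_pos (by norm_num), ih (fun x hx => h x (by simp [hx]))]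
      simp [List.count_cons, List.replicate_succ]
    · rw [if_neg (by norm_num), ih (fun x hx => h x (by simp [hx]))]
      simp [List.count_cons]

lemma exists_dbl : ∀ (n : ℕ) (l : List ℕ), l.length ≤ n → l.Pairwise (· ≥ ·) →
    (∀ x : ℕ, Even (l.count x)) → ∃ v, l = dbl v ∧ v.Pairwise (· ≥ ·) := by
  intro n
  induction n with
  | zero =>
    intro l hl _ _
    have : l = [] := List.eq_nil_of_length_eq_zero (by omega)
    exact ⟨[], by simp [this, dbl]⟩
  | succ n ih =>
    intro l hl hs hc
    cases l with
    | nil => exact ⟨[], by simp [dbl]⟩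
    | cons c t =>
      have hct : c ∈ t := by
        have := hc c
        rw [List.count_cons_self] at this
        have hpos : 0 < t.count c := by
          rcases this with ⟨r, hr⟩; omega
        exact List.count_pos_iff.mp hpos
      cases t with
      | nil => simp at hct
      | cons c₂ t₂ =>
        rw [List.pairwise_cons] at hs
        have hs2 := hs.2
        rw [List.pairwise_cons] at hs2
        have hcc : c₂ = c := by
          have h1 : c ≥ c₂ := hs.1 c₂ (by simp)
          rcases (by simpa using hct : c = c₂ ∨ c ∈ t₂) with h | h
          · omega
          · have := hs2.1 c h; omega
        subst hcc
        have hc2 : ∀ x : ℕ, Even (t₂.count x) := by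
          intro x
          have := hc x
          by_cases hx : x = c₂
          · subst hx
            rw [List.count_cons_self, List.count_cons_self] at this
            rcases this with ⟨r, hr⟩; exact ⟨r - 1, by omega⟩
          · rwa [List.count_cons_of_ne (Ne.symm hx), List.count_cons_of_ne (Ne.symm hx)] at this
        have hlen : t₂.length ≤ n := by simp at hl; omega
        obtain ⟨v', hv', hv's⟩ := ih t₂ hlen hs2.2 hc2
        refine ⟨c₂ :: v', by simp [dbl, hv'], ?_⟩
        rw [List.pairwise_cons]
        refine ⟨fun b hb => ?_, hv's⟩
        have : b ∈ t₂ := by rw [hv'] at *; exact mem_dbl.mpr hb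
        exact hs2.1 b this

def InC (l : List ℕ) : Prop :=
  ∃ a w, l = a :: dbl w ∧ Odd a ∧ 3 ≤ a ∧ w ≠ [] ∧
    (a :: w).Pairwise (· ≥ ·) ∧ ∀ x ∈ w, Odd x

def Pp (l : List ℕ) : Prop :=
  InC l ∨ (∃ e, 2 ≤ e ∧ Even e ∧ l = dbl [e]) ∨
    (∃ t, 1 ≤ t ∧ l = dbl (List.replicate t 2))

lemma Pp_ne_nil {l : List ℕ} (h : Pp l) : l ≠ [] := by
  rcases h with ⟨a, w, rfl, _⟩ | ⟨e, _, _, rfl⟩ | ⟨t, ht, rfl⟩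
  · simp
  · simp [dbl]
  · exact dbl_ne_nil (by simp; omega)

lemma topRow_cons (a : ℕ) (t : List ℕ) : topRow (a :: t) = t := rfl

lemma odd_ge_one {x : ℕ} (h : Odd x) : 1 ≤ x := by
  rcases h with ⟨k, hk⟩; omega

lemma pp_sg : ∀ (n : ℕ) (l : List ℕ), Pp l → wt l ≤ n → SG l = 0 := by
  intro n
  induction n with
  | zero =>
    intro l hp hwt
    have := Pp_ne_nil hp
    have : 0 < l.length := List.length_pos_iff.mpr this
    unfold wt at hwt; omega
  | succ n ih =>
    intro l hp hwt
    have hlne := Pp_ne_nil hp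
    have hwL := wt_leftCol_lt l hlne
    have hwT := wt_topRow_lt l hlne
    apply sg_zero_of hlne
    -- two goals: SG (leftCol l) ≠ 0 and SG (topRow l) ≠ 0
    · -- SG (leftCol l) ≠ 0
      rcases hp with ⟨a, w, rfl, ha, ha3, hw, hs, hodd⟩ | ⟨e, he2, he, rfl⟩ | ⟨t, ht, rfl⟩
      · -- class C
        cases w with
        | nil => exact absurd rfl hw
        | cons b w' =>
          have hb : Odd b := hodd b (by simp)
          have hsb : (b :: w').Pairwise (· ≥ ·) := hs.of_cons
          have hba : b ≤ a := by
            rw [List.pairwise_cons] at hs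
            exact hs.1 b (by simp)
          have hLl : leftCol (a :: dbl (b :: w')) = (a-1) :: dbl (leftCol (b :: w')) := by
            rw [leftCol_cons, if_pos (by omega), leftCol_dbl]
          by_cases hb3 : 3 ≤ b
          · have hLbw : leftCol (b :: w') = (b-1) :: leftCol w' := by
              rw [leftCol_cons, if_pos (by omega)]
            by_cases ha5 : 5 ≤ a
            · -- respond with L, reach (a-2) :: dbl (leftCol (leftCol (b::w'))) ∈ C
              apply sg_pos_of (by rw [hLl]; simp) (Or.inl ?_)
              have hLLl : leftCol (leftCol (a :: dbl (b :: w'))) =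
                  (a-2) :: dbl (leftCol (leftCol (b :: w'))) := by
                rw [hLl, leftCol_cons, if_pos (by omega), leftCol_dbl,
                  Nat.sub_sub]
              rw [hLLl]
              apply ih
              · left
                refine ⟨a-2, leftCol (leftCol (b :: w')), rfl, ?_, by omega, ?_, ?_, ?_⟩
                · rcases ha with ⟨k, hk⟩; exact ⟨k-1, by omega⟩
                · rw [hLbw, leftCol_cons, if_pos (by omega)]; simp
                · have h1 := sorted_cons_leftCol hs
                  have h2 := sorted_cons_leftCol h1
                  rwa [Nat.sub_sub] at h2
                · intro x hx
                  obtain ⟨y, hy, hy2, rfl⟩ := mem_leftCol.mp hx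
                  obtain ⟨z, hz, hz2, rfl⟩ := mem_leftCol.mp hy
                  have hzo : Odd z := hodd z hz
                  rcases hzo with ⟨k, hk⟩
                  exact ⟨k-1, by omega⟩
              · have := wt_leftCol_lt (leftCol (a :: dbl (b :: w'))) (by rw [hLl]; simp)
                rw [hLLl] at this
                omega
            · -- a = 3, hence b = 3; respond with T into C₂'
              have ha3' : a = 3 := by
                rcases ha with ⟨k, hk⟩; omega
              have h31 : ∀ x ∈ b :: w', x = 3 ∨ x = 1 := by
                intro x hx
                have hxo : Odd x := hodd x hx
                have hxa : x ≤ a := by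
                  rw [List.pairwise_cons] at hs
                  exact hs.1 x hx
                rcases hxo with ⟨k, hk⟩; omega
              have hcount : 1 ≤ (b :: w').count 3 := by
                have : b = 3 := by omega
                rw [this, List.count_cons_self]; omega
              have hLw : leftCol (b :: w') = List.replicate ((b :: w').count 3) 2 :=
                leftCol_three_one h31
              apply sg_pos_of (by rw [hLl]; simp) (Or.inr ?_)
              rw [hLl, topRow_cons, hLw]
              apply ih
              · exact Or.inr (Or.inr ⟨(b :: w').count 3, hcount, rfl⟩)
              · have := wt_topRow_lt (leftCol (a :: dbl (b :: w'))) (by rw [hLl]; simp)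
                rw [hLl, topRow_cons, hLw] at this
                rw [hLl, hLw] at hwL
                omega
          · -- b = 1, all of w = 1, leftCol l = [a-1]; respond with T to []
            have hb1 : b = 1 := by rcases hb with ⟨k, hk⟩; omega
            have hall : ∀ x ∈ b :: w', x ≤ 1 := by
              intro x hx
              rw [List.pairwise_cons] at hsb
              rcases (by simpa using hx : x = b ∨ x ∈ w') with rfl | h
              · omega
              · have := hsb.1 x h; omega
            have hLw : leftCol (b :: w') = [] := leftCol_eq_nil hall
            apply sg_pos_of (by rw [hLl]; simp) (Or.inr ?_)
            rw [hLl, topRow_cons, hLw]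
            show SG (dbl []) = 0
            exact SG_nil
      · -- class C₂ : l = [e, e]
        have hLl : leftCol (dbl [e]) = (e-1) :: (e-1) :: [] := by
          show leftCol [e, e] = _
          rw [leftCol_cons, if_pos (by omega), leftCol_cons, if_pos (by omega)]
          rfl
        by_cases he4 : 4 ≤ e
        · apply sg_pos_of (by rw [hLl]; simp) (Or.inl ?_)
          have heq : leftCol (leftCol (dbl [e])) = dbl [e-2] := by
            rw [hLl, leftCol_cons, if_pos (by omega), leftCol_cons, if_pos (by omega),
              Nat.sub_sub]
            rfl
          rw [heq]
          apply ih
          · exact Or.inr (Or.inl ⟨e-2, by omega, by rcases he with ⟨k, hk⟩; exact ⟨k-1, by omega⟩, rfl⟩)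
          · have := wt_leftCol_lt (leftCol (dbl [e])) (by rw [hLl]; simp)
            rw [heq] at this
            omega
        · -- e = 2
          have he2' : e = 2 := by rcases he with ⟨k, hk⟩; omega
          apply sg_pos_of (by rw [hLl]; simp) (Or.inl ?_)
          have : leftCol (leftCol (dbl [e])) = [] := by
            rw [hLl]
            exact leftCol_eq_nil (by intro x hx; simp at hx; omega)
          rw [this]; exact SG_nil
      · -- class C₂' : l = dbl (replicate t 2)
        have hLl : leftCol (dbl (List.replicate t 2)) = List.replicate (2*t) 1 := by
          rw [leftCol_dbl, leftCol_replicate_two, dbl_replicate]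
        apply sg_pos_of (by rw [hLl]; simp; omega) (Or.inl ?_)
        have : leftCol (leftCol (dbl (List.replicate t 2))) = [] := by
          rw [hLl]
          exact leftCol_eq_nil (by intro x hx; simp at hx; omega)
        rw [this]; exact SG_nil
    · -- SG (topRow l) ≠ 0
      rcases hp with ⟨a, w, rfl, ha, ha3, hw, hs, hodd⟩ | ⟨e, he2, he, rfl⟩ | ⟨t, ht, rfl⟩
      · -- class C
        cases w with
        | nil => exact absurd rfl hw
        | cons b w' =>
          have hb : Odd b := hodd b (by simp)
          have hsb : (b :: w').Pairwise (· ≥ ·) := hs.of_cons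
          have hTl : topRow (a :: dbl (b :: w')) = b :: b :: dbl w' := by
            rw [topRow_cons]; rfl
          by_cases hb3 : 3 ≤ b
          · by_cases hw' : w' = []
            · -- topRow l = [b, b]; respond L to dbl [b-1] ∈ C₂
              subst hw'
              apply sg_pos_of (by rw [hTl]; simp) (Or.inl ?_)
              have heq : leftCol (topRow (a :: dbl [b])) = dbl [b-1] := by
                rw [hTl, leftCol_cons, if_pos (by omega), leftCol_cons, if_pos (by omega)]
                rfl
              rw [heq]
              apply ih
              · exact Or.inr (Or.inl ⟨b-1, by omega, by rcases hb with ⟨k, hk⟩; exact ⟨k, by omega⟩, rfl⟩)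
              · have := wt_leftCol_lt (topRow (a :: dbl [b])) (by rw [hTl]; simp)
                rw [heq] at this
                omega
            · -- respond T to b :: dbl w' ∈ C
              apply sg_pos_of (by rw [hTl]; simp) (Or.inr ?_)
              have heq : topRow (topRow (a :: dbl (b :: w'))) = b :: dbl w' := by
                rw [hTl, topRow_cons]
              rw [heq]
              apply ih
              · exact Or.inl ⟨b, w', rfl, hb, hb3, hw', hsb, fun x hx => hodd x (by simp [hx])⟩
              · have := wt_topRow_lt (topRow (a :: dbl (b :: w'))) (by rw [hTl]; simp)
                rw [heq] at this
                omega
          · -- b = 1, topRow l all ones; respond L to []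
            have hb1 : b = 1 := by rcases hb with ⟨k, hk⟩; omega
            have hall : ∀ x ∈ b :: w', x ≤ 1 := by
              intro x hx
              rw [List.pairwise_cons] at hsb
              rcases (by simpa using hx : x = b ∨ x ∈ w') with rfl | h
              · omega
              · have := hsb.1 x h; omega
            apply sg_pos_of (by rw [hTl]; simp) (Or.inl ?_)
            have : leftCol (topRow (a :: dbl (b :: w'))) = [] := by
              rw [topRow_cons]
              exact leftCol_eq_nil (by intro x hx; exact hall x (mem_dbl.mp hx))
            rw [this]; exact SG_nil
      · -- class C₂ : topRow [e,e] = [e]; respond T to []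
        apply sg_pos_of (by show ([e] : List ℕ) ≠ []; simp) (Or.inr ?_)
        show SG (topRow [e]) = 0
        rw [topRow_cons]; exact SG_nil
      · -- class C₂'
        obtain ⟨t', rfl⟩ : ∃ t', t = t' + 1 := ⟨t - 1, by omega⟩
        have hTl : topRow (dbl (List.replicate (t'+1) 2)) = 2 :: dbl (List.replicate t' 2) := by
          rw [List.replicate_succ]
          rfl
        by_cases ht0 : t' = 0
        · subst ht0
          apply sg_pos_of (by rw [hTl]; simp) (Or.inr ?_)
          rw [hTl, topRow_cons]
          show SG (dbl []) = 0
          exact SG_nil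
        · apply sg_pos_of (by rw [hTl]; simp) (Or.inr ?_)
          rw [hTl, topRow_cons]
          apply ih
          · exact Or.inr (Or.inr ⟨t', by omega, rfl⟩)
          · have := wt_topRow_lt (topRow (dbl (List.replicate (t'+1) 2))) (by rw [hTl]; simp)
            rw [hTl, topRow_cons] at this
            rw [hTl] at hwT
            omega

/-- For a nonempty quadrated partition `λ`, we have `L(T(λ)) = T(L(λ))`, and
if this partition is not a single row `(n)` or a single column `(1ⁿ)`, then it
is a P-position in LCTR. -/
theorem SG_quadrated_LT (l : List ℕ) (hl : Quadrated l) (hne : l ≠ []) :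
    leftCol (topRow l) = topRow (leftCol l) ∧
    ((¬ (∃ n : ℕ, 0 < n ∧ leftCol (topRow l) = [n]) ∧
      ¬ (∃ n : ℕ, 0 < n ∧ leftCol (topRow l) = List.replicate n 1)) →
        SG (leftCol (topRow l)) = 0) := by
  obtain ⟨⟨hsort, hpos⟩, heven, hcount⟩ := hl
  obtain ⟨v, rfl, hvs⟩ := exists_dbl l.length l le_rfl hsort hcount
  cases v with
  | nil => exact absurd rfl hne
  | cons c v' =>
    have hmem : ∀ x ∈ c :: v', 2 ≤ x := by
      intro x hx
      have hx' : x ∈ dbl (c :: v') := mem_dbl.mpr hx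
      have h1 := hpos x hx'
      have h2 := heven x hx'
      rcases h2 with ⟨k, hk⟩; omega
    have hc2 : 2 ≤ c := hmem c (by simp)
    have hdbl : dbl (c :: v') = c :: c :: dbl v' := rfl
    have hT : topRow (dbl (c :: v')) = c :: dbl v' := rfl
    have hLT : leftCol (topRow (dbl (c :: v'))) = (c-1) :: dbl (leftCol v') := by
      rw [hT, leftCol_cons, if_pos (by omega), leftCol_dbl]
    constructor
    · -- commutation
      rw [hLT, hdbl, leftCol_cons, if_pos (by omega), leftCol_cons, if_pos (by omega),
        leftCol_dbl, topRow_cons]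
    · rintro ⟨h1, h2⟩
      by_cases hv' : v' = []
      · exfalso
        subst hv'
        exact h1 ⟨c - 1, by omega, by rw [hLT]; rfl⟩
      · by_cases hcc : c = 2
        · exfalso
          subst hcc
          have hall2 : ∀ x ∈ v', x = 2 := by
            intro x hx
            have := hmem x (by simp [hx])
            rw [List.pairwise_cons] at hvs
            have := hvs.1 x hx
            omega
          have hrep : v' = List.replicate v'.length 2 :=
            List.eq_replicate_iff.mpr ⟨rfl, hall2⟩
          apply h2
          refine ⟨2 * v'.length + 1, by omega, ?_⟩
          rw [hLT, hrep, leftCol_replicate_two, dbl_replicate]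
          simp [List.replicate_succ]
        · -- the main case: c ≥ 4, v' ≠ []
          have hc4 : 4 ≤ c := by
            have : Even c := heven c (mem_dbl.mpr (by simp))
            rcases this with ⟨k, hk⟩; omega
          rw [hLT]
          apply pp_sg (wt ((c-1) :: dbl (leftCol v'))) _ _ le_rfl
          left
          refine ⟨c - 1, leftCol v', rfl, ?_, by omega, ?_, ?_, ?_⟩
          · have : Even c := heven c (mem_dbl.mpr (by simp))
            rcases this with ⟨k, hk⟩; exact ⟨k - 1, by omega⟩
          · cases v' with
            | nil => exact absurd rfl hv'
            | cons d v'' =>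
              have hd : 2 ≤ d := hmem d (by simp)
              rw [leftCol_cons, if_pos (by omega)]
              simp
          · exact sorted_cons_leftCol hvs
          · intro x hx
            obtain ⟨z, hz, hz2, rfl⟩ := mem_leftCol.mp hx
            have : Even z := heven z (mem_dbl.mpr (by simp [hz]))
            rcases this with ⟨k, hk⟩
            exact ⟨k - 1, by omega⟩
end

section
/- For every positive integer n, the staircase partition s_n = (n, n−1, …, 2, 1) satisfies SG(s_n) = 1 if n is odd and SG(s_n) = 0 if n is even in LCTR. -/
/-- The staircase partition `(n, n-1, ..., 2, 1)`. -/
def staircase (n : ℕ) : List ℕ := (List.range n).map (fun i => n - i)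

lemma staircase_succ (n : ℕ) : staircase (n + 1) = (n + 1) :: staircase n := by
  unfold staircase
  rw [List.range_succ_eq_map, List.map_cons, List.map_map]
  simp

lemma topRow_staircase (n : ℕ) : topRow (staircase (n + 1)) = staircase n := by
  rw [staircase_succ]; rfl

lemma leftCol_staircase (n : ℕ) : leftCol (staircase (n + 1)) = staircase n := by
  induction n with
  | zero => simp [staircase_succ, staircase, leftCol]
  | succ m ih =>
    rw [staircase_succ, leftCol, List.map_cons, List.filter_cons]
    have : (0 < m + 1 + 1 - 1) := by omega
    simp only [this, decide_true, if_true]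
    have : ((staircase (m + 1)).map (· - 1)).filter (fun x => decide (0 < x))
        = staircase m := ih
    rw [leftCol] at ih
    rw [ih, staircase_succ]
    norm_num

lemma mex_single_zero : mex {0} = 1 := by
  unfold mex
  have hne : ({n | n ∉ ({0} : Set ℕ)}).Nonempty := ⟨1, by simp⟩
  have hmem := Nat.sInf_mem hne
  have hle : sInf {n | n ∉ ({0} : Set ℕ)} ≤ 1 := Nat.sInf_le (by simp)
  rw [Set.mem_setOf_eq, Set.mem_singleton_iff] at hmem
  omega

lemma mex_single_one : mex {1} = 0 := by
  unfold mex
  exact Nat.sInf_eq_zero.mpr (Or.inl (by simp))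

lemma SG_staircase_aux (n : ℕ) : SG (staircase n) = if Even n then 0 else 1 := by
  induction n with
  | zero => simp [staircase, SG]
  | succ m ih =>
    have hne : staircase (m + 1) ≠ [] := by rw [staircase_succ]; simp
    rw [SG, dif_neg hne, leftCol_staircase, topRow_staircase, ih,
      Set.pair_eq_singleton]
    rcases Nat.even_or_odd m with h | h
    · rw [if_pos h, mex_single_zero, if_neg (by rw [Nat.even_add_one]; simpa using h)]
    · rw [if_neg (by simpa using h), mex_single_one,
        if_pos (by rw [Nat.even_add_one]; exact Nat.not_even_iff_odd.mpr h)]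

/-- The staircase partition `sₙ = (n, n-1, …, 2, 1)` has Sprague–Grundy value
1 if `n` is odd and 0 if `n` is even. -/
theorem SG_staircase (n : ℕ) (hn : 0 < n) :
    (Odd n → SG (staircase n) = 1) ∧ (Even n → SG (staircase n) = 0) := by
  rw [SG_staircase_aux]
  constructor
  · intro h; rw [if_neg (by simpa using h)]
  · intro h; rw [if_pos h]
end

section
/- Every Γ-partition is a P-position in LCTR: for all integers n > 1 and s > 0, SG((n, 1ˢ)) = 0, where (n, 1ˢ) is the partition with one part equal to n followed by s parts equal to 1. -/
lemma mex_pair_eq_zero_s11 (a b : ℕ) (ha : a ≠ 0) (hb : b ≠ 0) : mex {a, b} = 0 := by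
  apply Nat.sInf_eq_zero.mpr
  left
  simp [ha.symm, hb.symm, Set.mem_setOf_eq, Set.mem_insert_iff]

lemma mex_pair_ne_zero_s11 (a b : ℕ) (h : a = 0 ∨ b = 0) : mex {a, b} ≠ 0 := by
  intro hz
  rcases Nat.sInf_eq_zero.mp hz with h0 | he
  · simp only [Set.mem_setOf_eq, Set.mem_insert_iff, Set.mem_singleton_iff] at h0
    omega
  · have : a + b + 1 ∈ {n | n ∉ ({a, b} : Set ℕ)} := by
      simp only [Set.mem_setOf_eq, Set.mem_insert_iff, Set.mem_singleton_iff]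
      omega
    rw [he] at this
    exact this

lemma leftCol_cons_rep (n s : ℕ) (hn : 1 < n) :
    leftCol (n :: List.replicate s 1) = [n - 1] := by
  unfold leftCol
  simp only [List.map_cons, List.map_replicate, List.filter_cons]
  have h1 : 0 < n - 1 := by omega
  simp [h1, List.filter_replicate]

lemma leftCol_rep_s11 (s : ℕ) : leftCol (List.replicate s 1) = [] := by
  unfold leftCol
  simp [List.map_replicate, List.filter_replicate]

lemma SG_single_ne (m : ℕ) : SG [m] ≠ 0 := by
  rw [SG]
  simp only [List.cons_ne_nil, dite_false]
  have ht : topRow [m] = [] := rfl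
  rw [ht, SG_nil]
  exact mex_pair_ne_zero_s11 _ _ (Or.inr rfl)

lemma SG_rep_ne (s : ℕ) (hs : 0 < s) : SG (List.replicate s 1) ≠ 0 := by
  have hne : List.replicate s 1 ≠ [] := by
    simp [List.replicate_eq_nil_iff]; omega
  rw [SG]
  simp only [hne, dite_false]
  rw [leftCol_rep_s11, SG_nil]
  exact mex_pair_ne_zero_s11 _ _ (Or.inl rfl)

/-- Every Γ-partition `(n, 1ˢ)` with `n > 1` and `s > 0` is a P-position in
LCTR. -/
theorem SG_gamma (n s : ℕ) (hn : 1 < n) (hs : 0 < s) :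
    SG (n :: List.replicate s 1) = 0 := by
  rw [SG]
  simp only [List.cons_ne_nil, dite_false]
  rw [leftCol_cons_rep n s hn]
  have ht : topRow (n :: List.replicate s 1) = List.replicate s 1 := rfl
  rw [ht]
  exact mex_pair_eq_zero_s11 _ _ (SG_single_ne _) (SG_rep_ne s hs)
end

section
/- For any partition λ of n, the number of distinct partitions reachable from λ in LCTR (i.e., obtainable from λ by one or more applications of the moves L and T, including the empty partition) is at most n. -/
/-- One move in LCTR: remove the left column or the top row of a nonempty partition. -/
def Move (l m : List ℕ) : Prop := l ≠ [] ∧ (m = leftCol l ∨ m = topRow l)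

/-- `m` is reachable from `l` by one or more moves of LCTR. -/
def Reachable (l m : List ℕ) : Prop := Relation.TransGen Move l m

lemma IsPartition.leftCol' {l : List ℕ} (h : IsPartition l) : IsPartition (leftCol l) := by
  obtain ⟨hs, hp⟩ := h
  constructor
  · have h1 : (l.map (· - 1)).Pairwise (· ≥ ·) :=
      List.Pairwise.map _ (fun a b hab => Nat.sub_le_sub_right hab 1) hs
    exact h1.filter _
  · intro x hx
    simp [leftCol, List.mem_filter] at hx
    obtain ⟨⟨y, hy, rfl⟩, h2⟩ := hx
    omega

lemma IsPartition.drop' {l : List ℕ} (h : IsPartition l) (b : ℕ) : IsPartition (l.drop b) :=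
  ⟨List.Pairwise.sublist (List.drop_sublist b l) h.1,
   fun x hx => h.2 x (List.mem_of_mem_drop hx)⟩

lemma le_head_of_mem {a : ℕ} {t : List ℕ} (h : IsPartition (a :: t)) {x : ℕ}
    (hx : x ∈ a :: t) : x ≤ a := by
  cases hx with
  | head => exact le_rfl
  | tail _ hx => exact (List.pairwise_cons.mp h.1).1 x hx

lemma topRow_leftCol {l : List ℕ} (h : IsPartition l) :
    topRow (leftCol l) = leftCol (topRow l) := by
  cases l with
  | nil => rfl
  | cons a t =>
    by_cases ha : 1 < a
    · have h1 : leftCol (a :: t) = (a - 1) :: leftCol t := by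
        unfold leftCol
        rw [List.map_cons, List.filter_cons]
        have : 0 < a - 1 := by omega
        simp [this]
      rw [topRow, h1]
      rfl
    · have h1 : leftCol (a :: t) = [] := leftCol_eq_nil (fun x hx => by
        have := le_head_of_mem h hx; omega)
      have h2 : leftCol t = [] := leftCol_eq_nil (fun x hx => by
        have := le_head_of_mem h (List.mem_cons_of_mem _ hx); omega)
      simp [topRow, h1, h2]

lemma IsPartition.leftCol_iter {l : List ℕ} (h : IsPartition l) (a : ℕ) :
    IsPartition (leftCol^[a] l) := by
  induction a with
  | zero => exact h
  | succ a ih => rw [Function.iterate_succ_apply']; exact ih.leftCol'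

lemma topRow_leftCol_iter {l : List ℕ} (h : IsPartition l) (a : ℕ) :
    topRow (leftCol^[a] l) = leftCol^[a] (topRow l) := by
  induction a with
  | zero => rfl
  | succ a ih =>
    rw [Function.iterate_succ_apply', topRow_leftCol (h.leftCol_iter a), ih]
    exact (Function.iterate_succ_apply' _ _ _).symm

lemma leftCol_iter_nil (a : ℕ) : leftCol^[a] [] = [] :=
  Function.iterate_fixed rfl a

lemma headD_leftCol_s17 {l : List ℕ} (h : IsPartition l) (hne : leftCol l ≠ []) :
    (leftCol l).headD 0 = l.headD 0 - 1 := by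
  cases l with
  | nil => simp [leftCol] at hne
  | cons a t =>
    by_cases ha : 1 < a
    · have h1 : leftCol (a :: t) = (a - 1) :: leftCol t := by
        unfold leftCol
        rw [List.map_cons, List.filter_cons]
        have : 0 < a - 1 := by omega
        simp [this]
      simp [h1]
    · exact absurd (leftCol_eq_nil (fun x hx => by
        have := le_head_of_mem h hx; omega)) hne

lemma lt_headD_of_leftCol_iter_ne_nil {l : List ℕ} (h : IsPartition l) (a : ℕ)
    (hne : leftCol^[a] l ≠ []) : a < l.headD 0 := by
  induction a generalizing l with
  | zero =>
    cases l with
    | nil => simp at hne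
    | cons b t => have := h.2 b (by simp); simpa using this
  | succ a ih =>
    rw [Function.iterate_succ_apply] at hne
    have h2 : leftCol l ≠ [] := by
      intro e; rw [e, leftCol_iter_nil] at hne; exact hne rfl
    have h1 := ih h.leftCol' hne
    rw [headD_leftCol_s17 h h2] at h1
    omega

lemma reachable_rep {l m : List ℕ} (hl : IsPartition l) (h : Reachable l m) :
    ∃ a b, 1 ≤ a + b ∧ m = leftCol^[a] (l.drop b) := by
  induction h with
  | single hm =>
    rcases hm.2 with rfl | rfl
    · exact ⟨1, 0, by simp, by simp⟩
    · exact ⟨0, 1, by simp, by simp [topRow, List.drop_one]⟩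
  | tail _ hm ih =>
    obtain ⟨a, b, hab, rfl⟩ := ih
    rcases hm.2 with rfl | rfl
    · exact ⟨a + 1, b, by omega, (Function.iterate_succ_apply' _ _ _).symm⟩
    · refine ⟨a, b + 1, by omega, ?_⟩
      rw [topRow_leftCol_iter (hl.drop' b), topRow, List.tail_drop]

lemma sum_headD_drop (l : List ℕ) :
    ∑ b ∈ Finset.range l.length, (l.drop b).headD 0 = l.sum := by
  induction l with
  | nil => simp
  | cons a t ih =>
    rw [List.length_cons, Finset.sum_range_succ']
    simp only [List.drop_succ_cons, List.drop_zero, List.headD_cons, List.sum_cons]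
    rw [ih]
    omega

lemma no_reach_nil {m : List ℕ} (h : Reachable [] m) : False := by
  induction h with
  | single h => exact h.1 rfl
  | tail _ _ ih => exact ih


/-- For any partition of `n`, at most `n` distinct partitions are reachable
from it in LCTR. -/
theorem reachable_card_le (n : ℕ) (l : List ℕ) (hl : IsPartition l)
    (hsum : l.sum = n) :
    {m : List ℕ | Reachable l m}.Finite ∧
    {m : List ℕ | Reachable l m}.ncard ≤ n := by
  by_cases hnil : l = []
  · subst hnil
    have hempty : {m : List ℕ | Reachable [] m} = ∅ := by
      ext m
      simp only [Set.mem_setOf_eq, Set.mem_empty_iff_false, iff_false]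
      exact no_reach_nil
    rw [hempty]
    simp
  · set P : Finset ((_ : ℕ) × ℕ) :=
      (Finset.range l.length).sigma (fun b => Finset.range ((l.drop b).headD 0)) with hP
    set g : ((_ : ℕ) × ℕ) → List ℕ := fun p => leftCol^[p.2] (l.drop p.1) with hg
    have h00 : (⟨0, 0⟩ : (_ : ℕ) × ℕ) ∈ P := by
      rw [hP]
      simp only [Finset.mem_sigma, Finset.mem_range]
      constructor
      · exact List.length_pos_iff.mpr hnil
      · cases l with
        | nil => exact absurd rfl hnil
        | cons a t => simpa using hl.2 a (by simp)
    have hcard : P.card = n := by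
      rw [hP, Finset.card_sigma]
      simp only [Finset.card_range]
      rw [sum_headD_drop, hsum]
    have hsub : {m : List ℕ | Reachable l m} ⊆
        insert [] (↑((P.erase ⟨0, 0⟩).image g)) := by
      intro m hm
      obtain ⟨a, b, hab, rfl⟩ := reachable_rep hl hm
      by_cases hme : leftCol^[a] (l.drop b) = []
      · rw [hme]; exact Set.mem_insert _ _
      · apply Set.mem_insert_iff.mpr
        right
        have hdrop : l.drop b ≠ [] := by
          intro e
          rw [e, leftCol_iter_nil] at hme
          exact hme rfl
        have hb : b < l.length := by
          by_contra hb
          exact hdrop (List.drop_eq_nil_of_le (by omega))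
        have ha : a < (l.drop b).headD 0 :=
          lt_headD_of_leftCol_iter_ne_nil (hl.drop' b) a hme
        simp only [Finset.coe_image, Set.mem_image, Finset.mem_coe, Finset.mem_erase,
          Finset.mem_sigma, Finset.mem_range, hP]
        refine ⟨⟨b, a⟩, ⟨?_, hb, ha⟩, rfl⟩
        intro e
        have hb0 : b = 0 := congrArg Sigma.fst e
        have ha0 : a = 0 := by
          have := (Sigma.mk.inj_iff.mp e).2
          simpa using this
        omega
    have hfin : (insert [] (↑((P.erase ⟨0, 0⟩).image g)) : Set (List ℕ)).Finite :=
      Set.Finite.insert _ (Finset.finite_toSet _)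
    refine ⟨hfin.subset hsub, ?_⟩
    calc {m : List ℕ | Reachable l m}.ncard
        ≤ (insert [] (↑((P.erase ⟨0, 0⟩).image g)) : Set (List ℕ)).ncard :=
          Set.ncard_le_ncard hsub hfin
      _ ≤ (↑((P.erase ⟨0, 0⟩).image g) : Set (List ℕ)).ncard + 1 := Set.ncard_insert_le _ _
      _ ≤ n := by
          rw [Set.ncard_coe_finset]
          have h1 : ((P.erase ⟨0, 0⟩).image g).card ≤ (P.erase ⟨0, 0⟩).card :=
            Finset.card_image_le
          have h2 : (P.erase ⟨0, 0⟩).card = P.card - 1 := Finset.card_erase_of_mem h00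
          have h3 : 1 ≤ n := by rw [← hcard]; exact Finset.card_pos.mpr ⟨_, h00⟩
          omega
end
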